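/- Let n ≥ 6, a ≥ 2 have the same parity, with k = (n−a−2)/2 ≥ 1 an integer. Let K_{2,a} * F_k be the graph obtained by identifying a vertex of K_{2,a} in the part of size 2 with the central vertex of the friendship graph F_k. Then ρ(K_{2,a} * F_k) < √(2n−4). -/

import Mathlib

/-- The spectral radius (largest adjacency eigenvalue) of a finite simple graph. -/
noncomputable def specRad {V : Type*} [Finite V] (G : SimpleGraph V) : ℝ :=
  letI := Fintype.ofFinite V
  letI := Classical.decEq V
  letI := Classical.decRel G.Adj
  sSup (spectrum ℝ (G.adjMatrix ℝ))

/-- The graph `K_{2,a} * F_k`, obtained by identifying a vertex of the part of size `2`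
of `K_{2,a}` with the central vertex of the friendship graph `F_k`.
Vertices `0, 1` form the part of size `2` (with `0` the identified center),
vertices `2, …, a+1` form the part of size `a`, and vertices `a+2, …, a+1+2k` are the
leaves of the friendship graph, paired by `{a+2+2i, a+3+2i}` and all joined to `0`. -/
def KstarF (a k : ℕ) : SimpleGraph (Fin (a + 2 + 2 * k)) :=
  SimpleGraph.fromRel (fun i j =>
    (2 ≤ i.val ∧ i.val < a + 2 ∧ (j.val = 0 ∨ j.val = 1)) ∨
    (i.val = 0 ∧ a + 2 ≤ j.val) ∨
    (a + 2 ≤ i.val ∧ a + 2 ≤ j.val ∧ (i.val - (a + 2)) / 2 = (j.val - (a + 2)) / 2))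

open Finset SimpleGraph

set_option linter.unusedSectionVars false

private lemma KstarF_adj_iff {a k : ℕ} (i j : Fin (a + 2 + 2 * k)) :
    (KstarF a k).Adj i j ↔ i.val ≠ j.val ∧ (
      (i.val = 0 ∧ 2 ≤ j.val) ∨ (j.val = 0 ∧ 2 ≤ i.val) ∨
      (i.val = 1 ∧ 2 ≤ j.val ∧ j.val < a + 2) ∨
      (j.val = 1 ∧ 2 ≤ i.val ∧ i.val < a + 2) ∨
      (a + 2 ≤ i.val ∧ a + 2 ≤ j.val ∧ (i.val - (a + 2)) / 2 = (j.val - (a + 2)) / 2)) := by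
  rw [KstarF, SimpleGraph.fromRel_adj, ne_eq, Fin.ext_iff]
  omega

/-- partner of a leaf -/
private def ptr (a k : ℕ) (l : Fin (a + 2 + 2 * k)) : Fin (a + 2 + 2 * k) :=
  ⟨(if (l.val - (a + 2)) % 2 = 0 then l.val + 1 else l.val - 1) % (a + 2 + 2 * k),
   Nat.mod_lt _ (by omega)⟩

private lemma ptr_spec {a k : ℕ} {l : Fin (a + 2 + 2 * k)} (hl : a + 2 ≤ l.val) :
    a + 2 ≤ (ptr a k l).val ∧
    ((ptr a k l).val - (a + 2)) / 2 = (l.val - (a + 2)) / 2 ∧ (ptr a k l).val ≠ l.val := by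
  have h2 := l.isLt
  have hlt : (if (l.val - (a + 2)) % 2 = 0 then l.val + 1 else l.val - 1) < a + 2 + 2 * k := by
    split <;> omega
  simp only [ptr, Nat.mod_eq_of_lt hlt]
  split <;> omega

section nbhd
variable {a k : ℕ} [Fintype (Fin (a + 2 + 2 * k))] [DecidableEq (Fin (a + 2 + 2 * k))]
  [DecidableRel (KstarF a k).Adj]

private lemma nbr0 (h0 : 0 < a + 2 + 2 * k) :
    (KstarF a k).neighborFinset ⟨0, h0⟩ = univ.filter (fun u => 2 ≤ u.val) := by
  ext u
  simp only [mem_neighborFinset, KstarF_adj_iff, mem_filter, mem_univ, true_and, Fin.val_mk]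
  omega

private lemma nbr1 (h1 : 1 < a + 2 + 2 * k) :
    (KstarF a k).neighborFinset ⟨1, h1⟩ =
      univ.filter (fun u => 2 ≤ u.val ∧ u.val < a + 2) := by
  ext u
  simp only [mem_neighborFinset, KstarF_adj_iff, mem_filter, mem_univ, true_and, Fin.val_mk]
  omega

private lemma nbrMid (h0 : 0 < a + 2 + 2 * k) (h1 : 1 < a + 2 + 2 * k)
    {m : Fin (a + 2 + 2 * k)} (hm : 2 ≤ m.val) (hm2 : m.val < a + 2) :
    (KstarF a k).neighborFinset m = {⟨0, h0⟩, ⟨1, h1⟩} := by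
  ext u
  simp only [mem_neighborFinset, KstarF_adj_iff, mem_insert, mem_singleton, Fin.ext_iff,
    Fin.val_mk]
  omega

private lemma nbrLeaf (h0 : 0 < a + 2 + 2 * k)
    {l : Fin (a + 2 + 2 * k)} (hl : a + 2 ≤ l.val) :
    (KstarF a k).neighborFinset l = {⟨0, h0⟩, ptr a k l} := by
  obtain ⟨hp1, hp2, hp3⟩ := ptr_spec hl
  have hlt := l.isLt
  ext u
  simp only [mem_neighborFinset, KstarF_adj_iff, mem_insert, mem_singleton, Fin.ext_iff,
    Fin.val_mk]
  omega

private lemma card_mid :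
    (univ.filter fun u : Fin (a + 2 + 2 * k) => 2 ≤ u.val ∧ u.val < a + 2).card = a := by
  have : (univ.filter fun u : Fin (a + 2 + 2 * k) => 2 ≤ u.val ∧ u.val < a + 2).card
      = (Finset.Ico 2 (a + 2)).card := by
    apply Finset.card_nbij (fun u => u.val)
    · intro u hu
      simp only [Finset.mem_coe, mem_filter] at hu
      simp only [Finset.mem_coe, Finset.mem_Ico]
      exact ⟨hu.2.1, hu.2.2⟩
    · intro u _ w _ h
      exact Fin.ext h
    · intro m hm
      simp only [Finset.coe_Ico, Set.mem_Ico] at hm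
      refine ⟨⟨m, by omega⟩, ?_, rfl⟩
      simp only [Finset.mem_coe, mem_filter, mem_univ, true_and, Fin.val_mk]
      omega
  rw [this, Nat.card_Ico]
  omega

private lemma card_leaf :
    (univ.filter fun u : Fin (a + 2 + 2 * k) => a + 2 ≤ u.val).card = 2 * k := by
  have : (univ.filter fun u : Fin (a + 2 + 2 * k) => a + 2 ≤ u.val).card
      = (Finset.Ico (a + 2) (a + 2 + 2 * k)).card := by
    apply Finset.card_nbij (fun u => u.val)
    · intro u hu
      simp only [Finset.mem_coe, mem_filter] at hu
      simp only [Finset.mem_coe, Finset.mem_Ico]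
      exact ⟨hu.2, u.isLt⟩
    · intro u _ w _ h
      exact Fin.ext h
    · intro m hm
      simp only [Finset.coe_Ico, Set.mem_Ico] at hm
      refine ⟨⟨m, by omega⟩, ?_, rfl⟩
      simp only [Finset.mem_coe, mem_filter, mem_univ, true_and, Fin.val_mk]
      omega
  rw [this, Nat.card_Ico]
  omega

private lemma card_ge2 :
    (univ.filter fun u : Fin (a + 2 + 2 * k) => 2 ≤ u.val).card = a + 2 * k := by
  have hsplit : (univ.filter fun u : Fin (a + 2 + 2 * k) => 2 ≤ u.val)
      = (univ.filter fun u => 2 ≤ u.val ∧ u.val < a + 2) ∪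
        (univ.filter fun u => a + 2 ≤ u.val) := by
    ext u
    simp only [mem_filter, mem_univ, true_and, mem_union]
    omega
  have hdisj : Disjoint (univ.filter fun u : Fin (a + 2 + 2 * k) => 2 ≤ u.val ∧ u.val < a + 2)
      (univ.filter fun u => a + 2 ≤ u.val) := by
    rw [Finset.disjoint_left]
    intro u hu hu'
    simp only [mem_filter, mem_univ, true_and] at hu hu'
    omega
  rw [hsplit, Finset.card_union_of_disjoint hdisj, card_mid, card_leaf]

end nbhd

private lemma eig_bound {a k : ℕ} (ha : 2 ≤ a) (hk : 1 ≤ k)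
    [Fintype (Fin (a + 2 + 2 * k))] [DecidableEq (Fin (a + 2 + 2 * k))]
    [DecidableRel (KstarF a k).Adj]
    {μ : ℝ} {x : Fin (a + 2 + 2 * k) → ℝ} (hx0 : x ≠ 0)
    (hx : ((KstarF a k).adjMatrix ℝ).mulVec x = μ • x) :
    μ ^ 2 < 2 * (a : ℝ) + 4 * (k : ℝ) := by
  have h0 : 0 < a + 2 + 2 * k := by omega
  have h1 : 1 < a + 2 + 2 * k := by omega
  set v0 : Fin (a + 2 + 2 * k) := ⟨0, h0⟩ with hv0
  set v1 : Fin (a + 2 + 2 * k) := ⟨1, h1⟩ with hv1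
  have hne01 : v0 ≠ v1 := by simp [hv0, hv1, Fin.ext_iff]
  have hka : (1:ℝ) ≤ (k:ℝ) := by exact_mod_cast hk
  have haa : (2:ℝ) ≤ (a:ℝ) := by exact_mod_cast ha
  haveI : Nonempty (Fin (a + 2 + 2 * k)) := ⟨v0⟩
  obtain ⟨v, -, hv⟩ := Finset.exists_max_image Finset.univ (fun u => |x u|) Finset.univ_nonempty
  set M := |x v| with hMdef
  have hM : ∀ u, |x u| ≤ M := fun u => hv u (Finset.mem_univ u)
  have hMpos : 0 < M := by
    rcases Function.ne_iff.1 hx0 with ⟨u, hu⟩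
    exact lt_of_lt_of_le (abs_pos.2 hu) (hM u)
  have hBB : ((KstarF a k).adjMatrix ℝ).mulVec (((KstarF a k).adjMatrix ℝ).mulVec x)
      = μ ^ 2 • x := by
    rw [hx, Matrix.mulVec_smul, hx, smul_smul, ← pow_two]
  have h2 : ∀ w, μ ^ 2 * x w
      = ∑ u ∈ (KstarF a k).neighborFinset w, ((KstarF a k).adjMatrix ℝ).mulVec x u := by
    intro w
    have h := congrFun hBB w
    rw [SimpleGraph.adjMatrix_mulVec_apply] at h
    simpa using h.symm
  have hE0 : ((KstarF a k).adjMatrix ℝ).mulVec x v0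
      = ∑ u ∈ univ.filter (fun u : Fin (a + 2 + 2 * k) => 2 ≤ u.val), x u := by
    rw [SimpleGraph.adjMatrix_mulVec_apply, nbr0 h0]
  have hE1 : ((KstarF a k).adjMatrix ℝ).mulVec x v1
      = ∑ u ∈ univ.filter (fun u : Fin (a + 2 + 2 * k) => 2 ≤ u.val ∧ u.val < a + 2), x u := by
    rw [SimpleGraph.adjMatrix_mulVec_apply, nbr1 h1]
  have hEm : ∀ m : Fin (a + 2 + 2 * k), 2 ≤ m.val → m.val < a + 2 →
      ((KstarF a k).adjMatrix ℝ).mulVec x m = x v0 + x v1 := by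
    intro m hm hm2
    rw [SimpleGraph.adjMatrix_mulVec_apply, nbrMid h0 h1 hm hm2, Finset.sum_pair hne01]
  have hEl : ∀ l : Fin (a + 2 + 2 * k), a + 2 ≤ l.val →
      ((KstarF a k).adjMatrix ℝ).mulVec x l = x v0 + x (ptr a k l) := by
    intro l hl
    have hne : v0 ≠ ptr a k l := by
      have h := (ptr_spec hl).1
      rw [hv0, Ne, Fin.ext_iff]
      simp only [Fin.val_mk]
      omega
    rw [SimpleGraph.adjMatrix_mulVec_apply, nbrLeaf h0 hl, Finset.sum_pair hne]
  have habs0 : |((KstarF a k).adjMatrix ℝ).mulVec x v0| ≤ ((a : ℝ) + 2 * k) * M := by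
    rw [hE0]
    calc |∑ u ∈ univ.filter (fun u : Fin (a + 2 + 2 * k) => 2 ≤ u.val), x u|
        ≤ ∑ u ∈ univ.filter (fun u : Fin (a + 2 + 2 * k) => 2 ≤ u.val), |x u| :=
          Finset.abs_sum_le_sum_abs _ _
      _ ≤ (univ.filter (fun u : Fin (a + 2 + 2 * k) => 2 ≤ u.val)).card • M :=
          Finset.sum_le_card_nsmul _ _ _ (fun u _ => hM u)
      _ = ((a + 2 * k : ℕ) : ℝ) * M := by rw [card_ge2, nsmul_eq_mul]
      _ = ((a : ℝ) + 2 * k) * M := by push_cast; ring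
  have habs1 : |((KstarF a k).adjMatrix ℝ).mulVec x v1| ≤ (a : ℝ) * M := by
    rw [hE1]
    calc |∑ u ∈ univ.filter (fun u : Fin (a + 2 + 2 * k) => 2 ≤ u.val ∧ u.val < a + 2), x u|
        ≤ ∑ u ∈ univ.filter (fun u : Fin (a + 2 + 2 * k) => 2 ≤ u.val ∧ u.val < a + 2), |x u| :=
          Finset.abs_sum_le_sum_abs _ _
      _ ≤ (univ.filter (fun u : Fin (a + 2 + 2 * k) => 2 ≤ u.val ∧ u.val < a + 2)).card • M :=
          Finset.sum_le_card_nsmul _ _ _ (fun u _ => hM u)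
      _ = ((a : ℕ) : ℝ) * M := by rw [card_mid, nsmul_eq_mul]
      _ = (a : ℝ) * M := by norm_cast
  -- the claim when the max is attained at v1
  have hC1 : |x v1| = M → μ ^ 2 ≤ 2 * (a : ℝ) := by
    intro hxv1
    have h := h2 v1
    rw [nbr1 h1] at h
    have hcongr : ∑ u ∈ univ.filter (fun u : Fin (a + 2 + 2 * k) => 2 ≤ u.val ∧ u.val < a + 2),
          ((KstarF a k).adjMatrix ℝ).mulVec x u
        = ∑ _u ∈ univ.filter (fun u : Fin (a + 2 + 2 * k) => 2 ≤ u.val ∧ u.val < a + 2),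
          (x v0 + x v1) := by
      refine Finset.sum_congr rfl (fun u hu => ?_)
      simp only [mem_filter] at hu
      exact hEm u hu.2.1 hu.2.2
    rw [hcongr, Finset.sum_const, card_mid, nsmul_eq_mul] at h
    have hle : μ ^ 2 * M ≤ (2 * (a : ℝ)) * M := by
      calc μ ^ 2 * M = |μ ^ 2 * x v1| := by
            rw [abs_mul, abs_of_nonneg (sq_nonneg μ), hxv1]
        _ = |(a : ℝ) * (x v0 + x v1)| := by rw [h]
        _ ≤ (a : ℝ) * |x v0 + x v1| := by
            rw [abs_mul, abs_of_nonneg (Nat.cast_nonneg a)]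
        _ ≤ (a : ℝ) * (|x v0| + |x v1|) :=
            mul_le_mul_of_nonneg_left (abs_add_le _ _) (Nat.cast_nonneg a)
        _ ≤ (a : ℝ) * (M + M) :=
            mul_le_mul_of_nonneg_left (add_le_add (hM v0) (hM v1)) (Nat.cast_nonneg a)
        _ = (2 * (a : ℝ)) * M := by ring
    exact le_of_mul_le_mul_right hle hMpos
  have habs4 : ∀ p q r s : ℝ, |p + q + r + s| ≤ |p| + |q| + |r| + |s| := by
    intro p q r s
    calc |p + q + r + s| ≤ |p + q + r| + |s| := abs_add_le _ _
      _ ≤ (|p + q| + |r|) + |s| := by linarith [abs_add_le (p + q) r]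
      _ ≤ _ := by linarith [abs_add_le p q]
  rcases lt_or_ge v.val 2 with hv2 | hv2
  · rcases (by omega : v.val = 1 ∨ v.val = 0) with hveq | hveq
    · -- max at v1
      have : v = v1 := Fin.ext (by rw [hveq, hv1])
      have h := hC1 (by rw [← this])
      linarith
    · -- max at v0
      have hvv0 : v = v0 := Fin.ext (by rw [hveq, hv0])
      by_cases hx1 : |x v1| = M
      · have h := hC1 hx1
        linarith
      · have hx1' : |x v1| < M := lt_of_le_of_ne (hM v1) hx1
        have h := h2 v0
        rw [nbr0 h0] at h
        have hsplit : (univ.filter fun u : Fin (a + 2 + 2 * k) => 2 ≤ u.val)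
            = (univ.filter fun u => 2 ≤ u.val ∧ u.val < a + 2) ∪
              (univ.filter fun u => a + 2 ≤ u.val) := by
          ext u
          simp only [mem_filter, mem_univ, true_and, mem_union]
          omega
        have hdisj : Disjoint
            (univ.filter fun u : Fin (a + 2 + 2 * k) => 2 ≤ u.val ∧ u.val < a + 2)
            (univ.filter fun u => a + 2 ≤ u.val) := by
          rw [Finset.disjoint_left]
          intro u hu hu'
          simp only [mem_filter, mem_univ, true_and] at hu hu'
          omega
        rw [hsplit, Finset.sum_union hdisj] at h
        have e1 : ∑ u ∈ univ.filter (fun u : Fin (a + 2 + 2 * k) => 2 ≤ u.val ∧ u.val < a + 2),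
              ((KstarF a k).adjMatrix ℝ).mulVec x u = (a : ℝ) * (x v0 + x v1) := by
          rw [Finset.sum_congr rfl (fun u hu => by
            simp only [mem_filter] at hu
            exact hEm u hu.2.1 hu.2.2), Finset.sum_const, card_mid, nsmul_eq_mul]
        have e2 : ∑ u ∈ univ.filter (fun u : Fin (a + 2 + 2 * k) => a + 2 ≤ u.val),
              ((KstarF a k).adjMatrix ℝ).mulVec x u
            = ((2 * k : ℕ) : ℝ) * x v0
              + ∑ u ∈ univ.filter (fun u : Fin (a + 2 + 2 * k) => a + 2 ≤ u.val),
                  x (ptr a k u) := by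
          rw [Finset.sum_congr rfl (fun u hu => by
            simp only [mem_filter] at hu
            exact hEl u hu.2), Finset.sum_add_distrib, Finset.sum_const, card_leaf, nsmul_eq_mul]
        rw [e1, e2] at h
        set S := ∑ u ∈ univ.filter (fun u : Fin (a + 2 + 2 * k) => a + 2 ≤ u.val),
          x (ptr a k u) with hS
        have hSb : |S| ≤ (2 * (k : ℝ)) * M := by
          calc |S| ≤ ∑ u ∈ univ.filter (fun u : Fin (a + 2 + 2 * k) => a + 2 ≤ u.val),
                |x (ptr a k u)| := Finset.abs_sum_le_sum_abs _ _
            _ ≤ (univ.filter (fun u : Fin (a + 2 + 2 * k) => a + 2 ≤ u.val)).card • M :=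
                Finset.sum_le_card_nsmul _ _ _ (fun u _ => hM _)
            _ = ((2 * k : ℕ) : ℝ) * M := by rw [card_leaf, nsmul_eq_mul]
            _ = (2 * (k : ℝ)) * M := by push_cast; ring
        have h' : μ ^ 2 * x v0
            = (a : ℝ) * x v0 + (a : ℝ) * x v1 + (2 * (k : ℝ)) * x v0 + S := by
          push_cast at h
          linear_combination h
        have hMv0 : |x v0| = M := by rw [← hvv0]
        have hlt : μ ^ 2 * M < (2 * (a : ℝ) + 4 * (k : ℝ)) * M := by
          have t1 : |(a : ℝ) * x v1| < (a : ℝ) * M := by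
            rw [abs_mul, abs_of_nonneg (Nat.cast_nonneg a)]
            exact mul_lt_mul_of_pos_left hx1' (by linarith)
          have t0 : |(a : ℝ) * x v0| = (a : ℝ) * M := by
            rw [abs_mul, abs_of_nonneg (Nat.cast_nonneg a), hMv0]
          have t2 : |(2 * (k : ℝ)) * x v0| = 2 * (k : ℝ) * M := by
            rw [abs_mul, abs_of_nonneg (by linarith : (0:ℝ) ≤ 2 * (k : ℝ)), hMv0]
          calc μ ^ 2 * M = |μ ^ 2 * x v0| := by
                rw [abs_mul, abs_of_nonneg (sq_nonneg μ), hMv0]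
            _ = |(a : ℝ) * x v0 + (a : ℝ) * x v1 + (2 * (k : ℝ)) * x v0 + S| := by rw [h']
            _ ≤ |(a : ℝ) * x v0| + |(a : ℝ) * x v1| + |(2 * (k : ℝ)) * x v0| + |S| :=
                habs4 _ _ _ _
            _ < (2 * (a : ℝ) + 4 * (k : ℝ)) * M := by
                rw [t0, t2]
                nlinarith [hSb, t1]
        exact lt_of_mul_lt_mul_right hlt (le_of_lt hMpos)
  · rcases lt_or_ge v.val (a + 2) with hva | hva
    · -- middle
      have h := h2 v
      rw [nbrMid h0 h1 hv2 hva, Finset.sum_pair hne01] at h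
      have hle : μ ^ 2 * M ≤ (2 * (a : ℝ) + 2 * (k : ℝ)) * M := by
        calc μ ^ 2 * M = |μ ^ 2 * x v| := by
              rw [abs_mul, abs_of_nonneg (sq_nonneg μ), ← hMdef]
          _ = |((KstarF a k).adjMatrix ℝ).mulVec x v0
              + ((KstarF a k).adjMatrix ℝ).mulVec x v1| := by rw [h]
          _ ≤ _ + _ := abs_add_le _ _
          _ ≤ ((a : ℝ) + 2 * k) * M + (a : ℝ) * M := add_le_add habs0 habs1
          _ = (2 * (a : ℝ) + 2 * (k : ℝ)) * M := by ring
      have := le_of_mul_le_mul_right hle hMpos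
      linarith
    · -- leaf
      have hpl := ptr_spec hva
      have hnep : v0 ≠ ptr a k v := by
        rw [hv0, Ne, Fin.ext_iff]
        simp only [Fin.val_mk]
        omega
      have h := h2 v
      rw [nbrLeaf h0 hva, Finset.sum_pair hnep] at h
      rw [hEl _ hpl.1] at h
      have hle : μ ^ 2 * M ≤ ((a : ℝ) + 2 * (k : ℝ) + 2) * M := by
        calc μ ^ 2 * M = |μ ^ 2 * x v| := by
              rw [abs_mul, abs_of_nonneg (sq_nonneg μ), ← hMdef]
          _ = |((KstarF a k).adjMatrix ℝ).mulVec x v0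
              + (x v0 + x (ptr a k (ptr a k v)))| := by rw [h]
          _ ≤ |((KstarF a k).adjMatrix ℝ).mulVec x v0| + |x v0 + x (ptr a k (ptr a k v))| :=
              abs_add_le _ _
          _ ≤ ((a : ℝ) + 2 * k) * M + (|x v0| + |x (ptr a k (ptr a k v))|) :=
              add_le_add habs0 (abs_add_le _ _)
          _ ≤ ((a : ℝ) + 2 * k) * M + (M + M) := by
              have := hM v0
              have := hM (ptr a k (ptr a k v))
              linarith
          _ = ((a : ℝ) + 2 * (k : ℝ) + 2) * M := by ring
      have := le_of_mul_le_mul_right hle hMpos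
      linarith

private lemma key_bound {a k : ℕ} (ha : 2 ≤ a) (hk : 1 ≤ k)
    [Fintype (Fin (a + 2 + 2 * k))] [DecidableEq (Fin (a + 2 + 2 * k))]
    [DecidableRel (KstarF a k).Adj] :
    sSup (spectrum ℝ ((KstarF a k).adjMatrix ℝ))
      < Real.sqrt (2 * ((a + 2 + 2 * k : ℕ) : ℝ) - 4) := by
  have h6 : (6 : ℝ) ≤ ((a + 2 + 2 * k : ℕ) : ℝ) := by
    exact_mod_cast (by omega : 6 ≤ a + 2 + 2 * k)
  have hT : (0:ℝ) < 2 * ((a + 2 + 2 * k : ℕ) : ℝ) - 4 := by linarith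
  rcases (spectrum ℝ ((KstarF a k).adjMatrix ℝ)).eq_empty_or_nonempty with he | hne
  · rw [he, Real.sSup_empty]
    exact Real.sqrt_pos.2 hT
  · have hmem := hne.csSup_mem (Matrix.finite_spectrum _)
    set μ := sSup (spectrum ℝ ((KstarF a k).adjMatrix ℝ)) with hμ
    rw [spectrum.mem_iff] at hmem
    have hdet : ((algebraMap ℝ (Matrix (Fin (a + 2 + 2 * k)) (Fin (a + 2 + 2 * k)) ℝ)) μ
        - (KstarF a k).adjMatrix ℝ).det = 0 := by
      by_contra hd
      exact hmem ((Matrix.isUnit_iff_isUnit_det _).2 (isUnit_iff_ne_zero.2 hd))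
    obtain ⟨y, hy0, hy⟩ := Matrix.exists_mulVec_eq_zero_iff.2 hdet
    have hxeig : ((KstarF a k).adjMatrix ℝ).mulVec y = μ • y := by
      have heval : ((algebraMap ℝ (Matrix (Fin (a + 2 + 2 * k)) (Fin (a + 2 + 2 * k)) ℝ)) μ
          - (KstarF a k).adjMatrix ℝ).mulVec y
          = μ • y - ((KstarF a k).adjMatrix ℝ).mulVec y := by
        rw [Matrix.sub_mulVec, Algebra.algebraMap_eq_smul_one, Matrix.smul_mulVec,
          Matrix.one_mulVec]
      rw [heval] at hy
      exact (sub_eq_zero.mp hy).symm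
    have hbound := eig_bound ha hk hy0 hxeig
    have heq : 2 * ((a + 2 + 2 * k : ℕ) : ℝ) - 4 = 2 * (a : ℝ) + 4 * (k : ℝ) := by
      push_cast; ring
    calc μ ≤ |μ| := le_abs_self μ
      _ = Real.sqrt (μ ^ 2) := (Real.sqrt_sq_eq_abs μ).symm
      _ < Real.sqrt (2 * ((a + 2 + 2 * k : ℕ) : ℝ) - 4) := by
          apply Real.sqrt_lt_sqrt (sq_nonneg μ)
          rw [heq]
          exact hbound

theorem stmt_18 (n a k : ℕ) (hn : 6 ≤ n) (ha : 2 ≤ a) (hk : 1 ≤ k)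
    (hnak : n = a + 2 + 2 * k) :
    specRad (KstarF a k) < Real.sqrt (2 * n - 4) := by
  subst hnak
  exact @key_bound a k ha hk (Fintype.ofFinite _) (Classical.decEq _)
    (Classical.decRel _)
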